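/- arXiv:1310.7462 — 2 statements merged into one kernel-verified Lean document; each statement's English description precedes it below -/
import Mathlib

section
/- Let X ~ N(0,1) under H₀, and suppose the decision rejects H₀ iff E(1-κ | X, τ) > 1/2, where the posterior satisfies the bound E(1-κ | x, τ) ≤ (A₀K/(a(1-a))) e^{x²/2} τ^{2a} L(1/τ²)(1+o(1)) uniformly in x as τ → 0. Then for a ∈ (0,1) and τ → 0, the type I error probability t₁ = P(E(1-κ|X,τ) > 1/2) satisfies t₁ ≤ (1/√(πa)) · (2A₀K/(a(1-a))) · τ^{2a} L(1/τ²) / √(log(1/τ²)) · (1+o(1)). -/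
open MeasureTheory ProbabilityTheory Filter Set Topology

/-- The unnormalized posterior density of the shrinkage coefficient `κ ∈ (0,1)`
given observation `x` and global parameter `τ`. -/
noncomputable def postDens (a : ℝ) (L : ℝ → ℝ) (τ x κ : ℝ) : ℝ :=
  κ ^ (a - 1/2) * (1 - κ) ^ (-a - 1) * L ((1 / τ ^ 2) * (1 / κ - 1)) *
    Real.exp (-(κ * x ^ 2) / 2)

/-- The posterior shrinkage weight `E(1-κ | x, τ)`. -/
noncomputable def postShrinkWeight (a : ℝ) (L : ℝ → ℝ) (τ x : ℝ) : ℝ :=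
  (∫ κ in Ioo (0:ℝ) 1, (1 - κ) * postDens a L τ x κ) /
    (∫ κ in Ioo (0:ℝ) 1, postDens a L τ x κ)


section AuxLemmas

lemma gausspdf_eq : gaussianPDFReal 0 1 = fun x => (Real.sqrt (2*Real.pi))⁻¹ * Real.exp (-x^2/2) := by
  funext x
  simp [gaussianPDFReal, neg_div]

lemma int_mul_exp_on (ζ : ℝ) : IntegrableOn (fun x : ℝ => x * Real.exp (-x^2/2)) (Ioi ζ) := by
  have : (fun x : ℝ => x * Real.exp (-x^2/2)) = fun x => x * Real.exp (-(1/2) * x^2) := by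
    funext x; ring_nf
  rw [this]
  exact (integrable_mul_exp_neg_mul_sq (by norm_num : (0:ℝ) < 1/2)).integrableOn

lemma int_exp_on (ζ : ℝ) : IntegrableOn (fun x : ℝ => Real.exp (-x^2/2)) (Ioi ζ) := by
  have : (fun x : ℝ => Real.exp (-x^2/2)) = fun x => Real.exp (-(1/2) * x^2) := by
    funext x; ring_nf
  rw [this]
  exact (integrable_exp_neg_mul_sq (by norm_num : (0:ℝ) < 1/2)).integrableOn

lemma int_x_exp (ζ : ℝ) : ∫ x in Ioi ζ, x * Real.exp (-x^2/2) = Real.exp (-ζ^2/2) := by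
  have h := integral_Ioi_of_hasDerivAt_of_tendsto' (a := ζ)
    (f := fun x => -Real.exp (-x^2/2)) (f' := fun x => x * Real.exp (-x^2/2)) (m := 0)
    (fun x _ => by
      have h1 : HasDerivAt (fun x : ℝ => -x^2/2) (-x) x := by
        simpa [neg_div] using ((hasDerivAt_pow 2 x).div_const 2).fun_neg
      have h2 := h1.exp
      convert h2.fun_neg using 1
      ring)
    (int_mul_exp_on ζ)
    (by
      have h3 : Tendsto (fun x : ℝ => -x^2/2) atTop atBot := by
        have h0 := (tendsto_pow_atTop (two_ne_zero)).atTop_div_const (show (0:ℝ) < 2 by norm_num)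
        simp only [neg_div]
        exact Filter.tendsto_neg_atTop_atBot.comp h0
      have := (Real.tendsto_exp_atBot.comp h3).neg
      simpa using this)
  rw [h]; ring

lemma gaussian_tail {ζ : ℝ} (hζ : 0 < ζ) :
    ((gaussianReal 0 1) (Iic (-ζ) ∪ Ioi ζ)).toReal ≤
      2 / (Real.sqrt (2*Real.pi) * ζ) * Real.exp (-ζ^2/2) := by
  have hmeas : MeasurableSet (Iic (-ζ) ∪ Ioi ζ) := measurableSet_Iic.union measurableSet_Ioi
  rw [gaussianReal_apply_eq_integral 0 one_ne_zero,
    ENNReal.toReal_ofReal (setIntegral_nonneg hmeas (fun x _ => gaussianPDFReal_nonneg 0 1 x))]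
  rw [gausspdf_eq]
  set f : ℝ → ℝ := fun x => (Real.sqrt (2*Real.pi))⁻¹ * Real.exp (-x^2/2) with hf
  have hfint : ∀ s : Set ℝ, IntegrableOn f s := fun s => by
    have : Integrable f := by rw [hf, ← gausspdf_eq]; exact integrable_gaussianPDFReal 0 1
    exact this.integrableOn
  have hsplit : ∫ x in Iic (-ζ) ∪ Ioi ζ, f x = (∫ x in Iic (-ζ), f x) + ∫ x in Ioi ζ, f x := by
    exact setIntegral_union (Iic_disjoint_Ioi (by linarith)) measurableSet_Ioi (hfint _) (hfint _)
  have hsym : ∫ x in Iic (-ζ), f x = ∫ x in Ioi ζ, f x := by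
    rw [← integral_comp_neg_Ioi]
    congr 1; funext x; simp [hf]
  have hbound : ∫ x in Ioi ζ, f x ≤ (Real.sqrt (2*Real.pi))⁻¹ * (Real.exp (-ζ^2/2) / ζ) := by
    have h1 : ∫ x in Ioi ζ, f x = (Real.sqrt (2*Real.pi))⁻¹ * ∫ x in Ioi ζ, Real.exp (-x^2/2) := by
      rw [← integral_const_mul]
    rw [h1]
    have h2 : ∫ x in Ioi ζ, Real.exp (-x^2/2) ≤ ∫ x in Ioi ζ, (ζ⁻¹ * (x * Real.exp (-x^2/2))) := by
      apply setIntegral_mono_on (int_exp_on ζ) ((int_mul_exp_on ζ).const_mul _) measurableSet_Ioi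
      intro x hx
      have hx' : ζ < x := hx
      have hxe : (0:ℝ) < Real.exp (-x^2/2) := Real.exp_pos _
      rw [← mul_assoc]
      nth_rewrite 1 [← one_mul (Real.exp (-x^2/2))]
      apply mul_le_mul_of_nonneg_right _ hxe.le
      rw [← div_eq_inv_mul]
      rw [le_div_iff₀ hζ]
      linarith
    have h3 : ∫ x in Ioi ζ, (ζ⁻¹ * (x * Real.exp (-x^2/2))) = Real.exp (-ζ^2/2) / ζ := by
      rw [integral_const_mul, int_x_exp]
      exact (div_eq_inv_mul _ _).symm
    exact mul_le_mul_of_nonneg_left (h2.trans_eq h3) (by positivity)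
  rw [hsplit, hsym]
  have hπ : (0:ℝ) < Real.sqrt (2*Real.pi) := Real.sqrt_pos.mpr (by positivity)
  have : 2 / (Real.sqrt (2*Real.pi) * ζ) * Real.exp (-ζ^2/2)
      = 2 * ((Real.sqrt (2*Real.pi))⁻¹ * (Real.exp (-ζ^2/2) / ζ)) := by
    field_simp
  rw [this]
  linarith


lemma shift_uniform {f : ℝ → ℝ} (hf : Measurable f)
    (hshift : ∀ t : ℝ, Tendsto (fun u => f (u + t) - f u) atTop (𝓝 0))
    {δ : ℝ} (hδ : 0 < δ) :
    ∀ᶠ u in atTop, ∀ t ∈ Icc (0:ℝ) 1, |f (u + t) - f u| ≤ δ := by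
  by_contra hcon
  rw [Filter.not_eventually] at hcon
  have H : ∀ n : ℕ, ∃ u : ℝ, (n:ℝ) ≤ u ∧ ∃ t, t ∈ Icc (0:ℝ) 1 ∧ δ < |f (u + t) - f u| := by
    intro n
    obtain ⟨u, hu, hP⟩ := (Filter.frequently_atTop.mp hcon) n
    push_neg at hP
    obtain ⟨t, ht, hP⟩ := hP
    exact ⟨u, hu, t, ht, hP⟩
  choose u hu t ht hft using H
  have hut : Tendsto u atTop atTop := tendsto_atTop_mono hu tendsto_natCast_atTop_atTop
  set v : ℕ → ℝ := fun n => u n + t n with hv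
  have hvt : Tendsto v atTop atTop :=
    tendsto_atTop_mono (fun n => le_add_of_nonneg_right (ht n).1) hut
  -- the two families of "good shift" sets
  set E : ℕ → Set ℝ := fun n =>
    Icc (0:ℝ) 2 ∩ ⋂ m, ⋂ (_ : n ≤ m), {s | |f (u m + s) - f (u m)| ≤ δ/2} with hE
  set E' : ℕ → Set ℝ := fun n =>
    Icc (-1:ℝ) 2 ∩ ⋂ m, ⋂ (_ : n ≤ m), {s | |f (v m + s) - f (v m)| ≤ δ/2} with hE'
  have hmeas : ∀ (w : ℕ → ℝ) (m : ℕ), MeasurableSet {s : ℝ | |f (w m + s) - f (w m)| ≤ δ/2} :=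
    fun w m => measurableSet_le ((hf.comp (measurable_const_add (w m))).sub
      measurable_const).abs measurable_const
  have hEmeas : ∀ n, MeasurableSet (E n) := fun n =>
    measurableSet_Icc.inter (MeasurableSet.iInter fun m => MeasurableSet.iInter fun _ => hmeas u m)
  have hE'meas : ∀ n, MeasurableSet (E' n) := fun n =>
    measurableSet_Icc.inter (MeasurableSet.iInter fun m => MeasurableSet.iInter fun _ => hmeas v m)
  have hmonoE : Monotone E := fun n n' hnn' s hs =>
    ⟨hs.1, mem_iInter.mpr fun m => mem_iInter.mpr fun hm =>
      mem_iInter.mp (mem_iInter.mp hs.2 m) (hnn'.trans hm)⟩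
  have hmonoE' : Monotone E' := fun n n' hnn' s hs =>
    ⟨hs.1, mem_iInter.mpr fun m => mem_iInter.mpr fun hm =>
      mem_iInter.mp (mem_iInter.mp hs.2 m) (hnn'.trans hm)⟩
  have hcover : ∀ (w : ℕ → ℝ), Tendsto w atTop atTop → ∀ s : ℝ,
      ∃ N : ℕ, ∀ m ≥ N, |f (w m + s) - f (w m)| ≤ δ/2 := by
    intro w hw s
    have h1 : Tendsto (fun m => f (w m + s) - f (w m)) atTop (𝓝 0) := (hshift s).comp hw
    have h2 := (Metric.tendsto_nhds.mp h1) (δ/2) (half_pos hδ)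
    simp only [Real.dist_eq, sub_zero] at h2
    obtain ⟨N, hN⟩ := eventually_atTop.mp h2
    exact ⟨N, fun m hm => (hN m hm).le⟩
  have hunionE : ⋃ n, E n = Icc (0:ℝ) 2 := by
    apply Subset.antisymm (iUnion_subset fun n s hs => hs.1)
    intro s hs
    obtain ⟨N, hN⟩ := hcover u hut s
    exact mem_iUnion.mpr ⟨N, hs, mem_iInter.mpr fun m => mem_iInter.mpr fun hm => hN m hm⟩
  have hunionE' : ⋃ n, E' n = Icc (-1:ℝ) 2 := by
    apply Subset.antisymm (iUnion_subset fun n s hs => hs.1)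
    intro s hs
    obtain ⟨N, hN⟩ := hcover v hvt s
    exact mem_iUnion.mpr ⟨N, hs, mem_iInter.mpr fun m => mem_iInter.mpr fun hm => hN m hm⟩
  have htendE : Tendsto (fun n => volume (E n)) atTop (𝓝 (ENNReal.ofReal 2)) := by
    have := tendsto_measure_iUnion_atTop (μ := volume) hmonoE
    rwa [hunionE, Real.volume_Icc, show (2:ℝ) - 0 = 2 by norm_num] at this
  have htendE' : Tendsto (fun n => volume (E' n)) atTop (𝓝 (ENNReal.ofReal 3)) := by
    have := tendsto_measure_iUnion_atTop (μ := volume) hmonoE'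
    rwa [hunionE', Real.volume_Icc, show (2:ℝ) - (-1) = 3 by norm_num] at this
  have hltE : ENNReal.ofReal (3/2) < ENNReal.ofReal 2 :=
    (ENNReal.ofReal_lt_ofReal_iff (by norm_num : (0:ℝ) < 2)).mpr (by norm_num)
  have hltE' : ENNReal.ofReal (5/2) < ENNReal.ofReal 3 :=
    (ENNReal.ofReal_lt_ofReal_iff (by norm_num : (0:ℝ) < 3)).mpr (by norm_num)
  have hev : ∀ᶠ n in atTop,
      ENNReal.ofReal (3/2) < volume (E n) ∧ ENNReal.ofReal (5/2) < volume (E' n) := by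
    filter_upwards [htendE.eventually_const_lt hltE,
      htendE'.eventually_const_lt hltE'] with n h1 h2
    exact ⟨h1, h2⟩
  obtain ⟨n, hEn, hE'n⟩ := hev.exists
  -- B := translate of E' n
  set B : Set ℝ := (fun s => s - t n) ⁻¹' (E' n) with hB
  have hBmeas : MeasurableSet B := (hE'meas n).preimage (measurable_sub_const _)
  have hBvol : volume B = volume (E' n) := by
    rw [hB]
    have : (fun s : ℝ => s - t n) = fun s => s + (-t n) := by funext s; ring
    rw [this, measure_preimage_add_right]
  have hsub : E n ∪ B ⊆ Icc (-1:ℝ) 3 := by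
    rintro s (hs | hs)
    · exact ⟨by linarith [hs.1.1], by linarith [hs.1.2]⟩
    · have h1 := hs.1
      have ha : -1 ≤ s - t n := h1.1
      have hb : s - t n ≤ 2 := h1.2
      have ht1 := (ht n).1
      have ht2 := (ht n).2
      exact ⟨by linarith, by linarith⟩
  have hne : (E n ∩ B).Nonempty := by
    by_contra hempty
    rw [Set.not_nonempty_iff_eq_empty] at hempty
    have hdisj : Disjoint (E n) B := Set.disjoint_iff_inter_eq_empty.mpr hempty
    have h1 : volume (E n ∪ B) = volume (E n) + volume B := measure_union hdisj hBmeas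
    have h2 : volume (E n ∪ B) ≤ ENNReal.ofReal 4 := by
      calc volume (E n ∪ B) ≤ volume (Icc (-1:ℝ) 3) := measure_mono hsub
      _ = ENNReal.ofReal 4 := by rw [Real.volume_Icc]; norm_num
    have h3 : ENNReal.ofReal 4 < volume (E n) + volume B := by
      rw [hBvol, show (ENNReal.ofReal 4) = ENNReal.ofReal (3/2) + ENNReal.ofReal (5/2) by
        rw [← ENNReal.ofReal_add (by norm_num) (by norm_num)]; norm_num]
      exact ENNReal.add_lt_add hEn hE'n
    rw [h1] at h2
    exact absurd (h3.trans_le h2) (lt_irrefl _)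
  obtain ⟨s, hsE, hsB⟩ := hne
  have h1 : |f (u n + s) - f (u n)| ≤ δ/2 :=
    mem_iInter.mp (mem_iInter.mp hsE.2 n) le_rfl
  have h2' : |f (v n + (s - t n)) - f (v n)| ≤ δ/2 :=
    mem_iInter.mp (mem_iInter.mp hsB.2 n) le_rfl
  have heq : v n + (s - t n) = u n + s := by simp only [hv]; ring
  rw [heq] at h2'
  have h3 := hft n
  have h4 : |f (u n + t n) - f (u n)| ≤ δ := by
    have htri := abs_sub_le (f (u n + t n)) (f (u n + s)) (f (u n))
    have hcomm : |f (u n + t n) - f (u n + s)| = |f (u n + s) - f (u n + t n)| := abs_sub_comm _ _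
    have : f (v n) = f (u n + t n) := by rw [hv]
    rw [this] at h2'
    rw [abs_sub_comm] at h2'
    linarith
  linarith


lemma div_tendsto_of_shift {f : ℝ → ℝ}
    (h : ∀ δ : ℝ, 0 < δ → ∀ᶠ u in atTop, ∀ t ∈ Icc (0:ℝ) 1, |f (u + t) - f u| ≤ δ) :
    Tendsto (fun u => f u / u) atTop (𝓝 0) := by
  rw [Metric.tendsto_nhds]
  intro ε hε
  simp only [Real.dist_eq, sub_zero]
  set δ := ε/2 with hδdef
  have hδ : 0 < δ := half_pos hε
  obtain ⟨N₀, hN₀⟩ := eventually_atTop.mp (h δ hδ)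
  set N := max N₀ 0 with hNdef
  have hN : ∀ u ≥ N, ∀ t ∈ Icc (0:ℝ) 1, |f (u + t) - f u| ≤ δ :=
    fun u hu => hN₀ u ((le_max_left _ _).trans hu)
  have hNnonneg : 0 ≤ N := le_max_right _ _
  -- inductive bound
  have key : ∀ k : ℕ, ∀ u : ℝ, N ≤ u → u ≤ N + k + 1 → |f u - f N| ≤ δ * (k + 1) := by
    intro k
    induction k with
    | zero =>
      intro u h1 h2
      have ht : u - N ∈ Icc (0:ℝ) 1 := ⟨by linarith, by push_cast at h2; linarith⟩
      have := hN N le_rfl (u - N) ht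
      rw [show N + (u - N) = u by ring] at this
      simpa using this
    | succ k ih =>
      intro u h1 h2
      by_cases hcase : u ≤ N + k + 1
      · have := ih u h1 hcase
        have hk : δ * (k+1) ≤ δ * (k+1+1) := by nlinarith [hδ.le]
        push_cast
        push_cast at this
        linarith
      · push_neg at hcase
        have h3 : N ≤ u - 1 := by push_cast at hcase; linarith
        have h4 : u - 1 ≤ N + k + 1 := by push_cast at h2 ⊢; linarith
        have h5 := ih (u - 1) h3 h4
        have h6 := hN (u - 1) h3 1 ⟨zero_le_one, le_rfl⟩
        rw [show u - 1 + 1 = u by ring] at h6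
        have htri := abs_sub_le (f u) (f (u - 1)) (f N)
        have hcm : |f u - f (u-1)| = |f (u-1) - f u| := abs_sub_comm _ _
        push_cast
        push_cast at h5
        linarith [abs_sub_comm (f (u-1)) (f u)]
  -- conclude
  have hbig : ∀ u : ℝ, N + 1 ≤ u → |f u| ≤ |f N| + δ * (u + 2) := by
    intro u hu
    have hu0 : N ≤ u := by linarith
    set k := ⌈u - N⌉₊ with hk
    have hk1 : u - N ≤ k := Nat.le_ceil _
    have hk2 : (k:ℝ) < u - N + 1 := Nat.ceil_lt_add_one (by linarith)
    have := key k u hu0 (by linarith)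
    have htri : |f u| ≤ |f u - f N| + |f N| := by
      have := abs_sub_abs_le_abs_sub (f u) (f N)
      have h2 := abs_sub_le (f u) (f N) 0
      simp at h2
      linarith [abs_sub_le (f u) (f N) 0, abs_nonneg (f N)]
    have hbound : δ * (k + 1) ≤ δ * (u + 2) := by
      apply mul_le_mul_of_nonneg_left _ hδ.le
      linarith
    linarith
  have hfar : ∀ᶠ u : ℝ in atTop, |f u / u| < ε := by
    have hlim : Tendsto (fun u : ℝ => (|f N| + 2*δ) / u) atTop (𝓝 0) :=
      tendsto_const_nhds.div_atTop tendsto_id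
    have hev2 := (Metric.tendsto_nhds.mp hlim) (ε - δ) (by simp [hδdef]; linarith)
    simp only [Real.dist_eq, sub_zero] at hev2
    filter_upwards [eventually_ge_atTop (N+1), eventually_gt_atTop (0:ℝ),
      eventually_ge_atTop (1:ℝ), hev2] with u hu hu0 hu1 hu2
    have hb := hbig u hu
    rw [abs_div, abs_of_pos hu0]
    have h1 : |f u| / u ≤ (|f N| + δ * (u + 2)) / u := (div_le_div_iff_of_pos_right hu0).mpr hb
    have h2 : (|f N| + δ * (u + 2)) / u = (|f N| + 2*δ)/u + δ := by
      field_simp; ring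
    have h3 : (|f N| + 2*δ)/u ≤ |(|f N| + 2*δ)/u| := le_abs_self _
    have h4 := hu2
    calc |f u| / u ≤ (|f N| + 2*δ)/u + δ := by rw [← h2]; exact h1
      _ < (ε - δ) + δ := by linarith
      _ = ε := by ring
  exact hfar


lemma slow_log_div {L : ℝ → ℝ} (hLmeas : Measurable L) (hLpos : ∀ t > 0, 0 < L t)
    (hslow : ∀ c > 0, Tendsto (fun x => L (c * x) / L x) atTop (𝓝 1)) :
    Tendsto (fun x => Real.log (L x) / Real.log x) atTop (𝓝 0) := by
  set f : ℝ → ℝ := fun u => Real.log (L (Real.exp u)) with hf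
  have hfmeas : Measurable f := Real.measurable_log.comp (hLmeas.comp Real.measurable_exp)
  have hshift : ∀ t : ℝ, Tendsto (fun u => f (u + t) - f u) atTop (𝓝 0) := by
    intro t
    have h1 : Tendsto (fun u : ℝ => L (Real.exp t * Real.exp u) / L (Real.exp u)) atTop (𝓝 1) :=
      (hslow (Real.exp t) (Real.exp_pos t)).comp Real.tendsto_exp_atTop
    have h2 : Tendsto (fun u : ℝ => Real.log (L (Real.exp t * Real.exp u) / L (Real.exp u)))
        atTop (𝓝 0) := by
      have hc : ContinuousAt Real.log 1 := Real.continuousAt_log one_ne_zero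
      have := hc.tendsto.comp h1
      simpa [Function.comp_def] using this
    apply h2.congr
    intro u
    have ha : 0 < L (Real.exp t * Real.exp u) :=
      hLpos _ (by positivity)
    have hb : 0 < L (Real.exp u) := hLpos _ (Real.exp_pos u)
    rw [Real.log_div ha.ne' hb.ne', hf]
    simp only []
    rw [← Real.exp_add]
    ring_nf
  have hmain : Tendsto (fun u => f u / u) atTop (𝓝 0) :=
    div_tendsto_of_shift (fun δ hδ => shift_uniform hfmeas hshift hδ)
  have hcomp : Tendsto (fun x : ℝ => f (Real.log x) / Real.log x) atTop (𝓝 0) :=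
    hmain.comp Real.tendsto_log_atTop
  apply hcomp.congr'
  filter_upwards [eventually_gt_atTop (0:ℝ)] with x hx
  rw [hf]
  simp only []
  rw [Real.exp_log hx]

lemma alg_id {P A Y S Z C D G : ℝ} (hP : P ≠ 0) (hA : A ≠ 0) (hY : Y ≠ 0) (hZ : Z ≠ 0)
    (hS : S * S = 2) :
    1 / (P * A) * (2 * C) * (D / Y) * (1 + (G * (S * A * Y) / Z - 1))
      = 2 / (S * P * Z) * (2 * C * D * G) := by
  have hS0 : S ≠ 0 := by intro h; rw [h] at hS; norm_num at hS
  have h1 : 1 + (G * (S * A * Y) / Z - 1) = G * (S * A * Y) / Z := by ring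
  rw [h1]
  field_simp
  linear_combination (C * D * G) * hS

end AuxLemmas

/-- Theorem 4.5 (type I error bound): under `H₀`, `X ~ N(0,1)`; if the posterior
shrinkage weight satisfies the moment bound uniformly in `x` as `τ → 0⁺`, then
the probability of rejecting `H₀` (i.e. of `E(1-κ|X,τ) > 1/2`) satisfies
`t₁ ≤ (1/√(πa)) (2A₀K/(a(1-a))) τ^{2a} L(1/τ²) / √(log(1/τ²)) (1+o(1))`. -/
theorem type_one_error_bound (a K A₀ : ℝ) (ha : a ∈ Ioo (0:ℝ) 1) (hK : 0 < K)
    (hA₀ : 1 ≤ A₀) (L : ℝ → ℝ)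
    (hLmeas : Measurable L)
    (hLpos : ∀ t > 0, 0 < L t)
    (hslow : ∀ c > 0, Tendsto (fun x => L (c * x) / L x) atTop (𝓝 1))
    (hnorm : K * ∫ t in Ioi (0:ℝ), t ^ (-a - 1) * L t = 1)
    (g : ℝ → ℝ) (hg : Tendsto g (𝓝[>] 0) (𝓝 0))
    (hbound : ∀ τ ∈ Ioo (0:ℝ) 1, ∀ x : ℝ,
      postShrinkWeight a L τ x ≤
        (A₀ * K / (a * (1 - a))) * Real.exp (x ^ 2 / 2) * τ ^ (2 * a) *
          L (1 / τ ^ 2) * (1 + g τ)) :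
    ∃ h : ℝ → ℝ, Tendsto h (𝓝[>] 0) (𝓝 0) ∧
      ∀ᶠ τ in 𝓝[>] (0:ℝ),
        ((gaussianReal 0 1) {x : ℝ | 1/2 < postShrinkWeight a L τ x}).toReal ≤
          (1 / Real.sqrt (Real.pi * a)) * (2 * A₀ * K / (a * (1 - a))) *
            (τ ^ (2 * a) * L (1 / τ ^ 2) / Real.sqrt (Real.log (1 / τ ^ 2))) *
            (1 + h τ) := by
  obtain ⟨ha0, ha1⟩ := ha
  have haa : 0 < a * (1 - a) := by nlinarith
  have hAK : 0 < A₀ * K := by nlinarith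
  set C : ℝ := A₀ * K / (a * (1 - a)) with hCdef
  have hCpos : 0 < C := div_pos hAK haa
  set y : ℝ → ℝ := fun τ => Real.log (1/τ^2) with hydef
  set sh : ℝ → ℝ := fun τ => τ ^ (2*a) * L (1/τ^2) with hshdef
  set B : ℝ → ℝ := fun τ => 2 * C * sh τ * (1 + g τ) with hBdef
  set Z : ℝ → ℝ := fun τ => Real.sqrt (-2 * Real.log (B τ)) with hZdef
  set w : ℝ → ℝ := fun τ =>
    (Real.log (2*C*(1 + g τ)) + Real.log (L (1/τ^2))) / (a * y τ) with hwdef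
  -- basic limits
  have hx2top : Tendsto (fun τ : ℝ => 1/τ^2) (𝓝[>] 0) atTop := by
    have h1 : Tendsto (fun τ : ℝ => τ^2) (𝓝[>] (0:ℝ)) (𝓝[>] (0:ℝ)) := by
      apply tendsto_nhdsWithin_of_tendsto_nhds_of_eventually_within
      · have h' : Tendsto (fun τ : ℝ => τ^2) (𝓝[>] (0:ℝ)) (𝓝 ((0:ℝ)^2)) :=
          ((continuous_pow 2).tendsto (0:ℝ)).mono_left nhdsWithin_le_nhds
        simpa using h'
      · filter_upwards [self_mem_nhdsWithin] with τ (hτ : 0 < τ)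
        exact pow_pos hτ 2
    have := tendsto_inv_nhdsGT_zero.comp h1
    simpa [one_div, Function.comp_def] using this
  have hytop : Tendsto y (𝓝[>] (0:ℝ)) atTop := Real.tendsto_log_atTop.comp hx2top
  have hρ : Tendsto (fun τ : ℝ => Real.log (L (1/τ^2)) / y τ) (𝓝[>] (0:ℝ)) (𝓝 0) :=
    (slow_log_div hLmeas hLpos hslow).comp hx2top
  -- eventual basic facts
  have hev1 : ∀ᶠ τ : ℝ in 𝓝[>] (0:ℝ), τ ∈ Ioo (0:ℝ) 1 :=
    eventually_mem_nhdsWithin.mono (fun τ hτ => hτ) |>.and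
      (eventually_nhdsWithin_of_eventually_nhds (eventually_lt_nhds zero_lt_one)) |>.mono
      (fun τ hτ => ⟨hτ.1, hτ.2⟩)
  have hev2 : ∀ᶠ τ : ℝ in 𝓝[>] (0:ℝ), |g τ| < 1/2 := by
    have := (Metric.tendsto_nhds.mp hg) (1/2) (by norm_num)
    simpa [Real.dist_eq] using this
  have hev3 : ∀ᶠ τ : ℝ in 𝓝[>] (0:ℝ), 0 < y τ := hytop.eventually_gt_atTop 0
  -- log decomposition
  have hlogB : ∀ τ : ℝ, τ ∈ Ioo (0:ℝ) 1 → 0 < 1 + g τ →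
      Real.log (B τ) = Real.log (2*C*(1 + g τ)) - a * y τ + Real.log (L (1/τ^2)) := by
    intro τ hτ hgp
    have hτ0 : 0 < τ := hτ.1
    have hLp : 0 < L (1/τ^2) := hLpos _ (by positivity)
    have hrp : (0:ℝ) < τ ^ (2*a) := Real.rpow_pos_of_pos hτ0 _
    have hBform : B τ = (2*C*(1 + g τ)) * (τ ^ (2*a)) * L (1/τ^2) := by
      simp only [hBdef, hshdef]; ring
    rw [hBform, Real.log_mul (by positivity) hLp.ne', Real.log_mul (by positivity) hrp.ne',
      Real.log_rpow hτ0]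
    have hy : y τ = -(2 * Real.log τ) := by
      simp only [hydef, one_div, Real.log_inv, Real.log_pow]
      push_cast; ring
    rw [hy]; ring
  -- w tends to 0
  have hwtend : Tendsto w (𝓝[>] (0:ℝ)) (𝓝 0) := by
    have hterm1 : Tendsto (fun τ : ℝ => Real.log (2*C*(1 + g τ)) / (a * y τ))
        (𝓝[>] (0:ℝ)) (𝓝 0) := by
      have hnum : Tendsto (fun τ : ℝ => Real.log (2*C*(1 + g τ))) (𝓝[>] (0:ℝ))
          (𝓝 (Real.log (2*C))) := by
        have h1 : Tendsto (fun τ : ℝ => 2*C*(1 + g τ)) (𝓝[>] (0:ℝ)) (𝓝 (2*C)) := by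
          have := (tendsto_const_nhds (x := (1:ℝ)) (f := 𝓝[>] (0:ℝ))).add hg
          have h2 := tendsto_const_nhds (x := 2*C) (f := 𝓝[>] (0:ℝ)) |>.mul (by simpa using this)
          simpa using h2
        exact ((Real.continuousAt_log (by positivity)).tendsto.comp h1)
      have hden : Tendsto (fun τ : ℝ => a * y τ) (𝓝[>] (0:ℝ)) atTop :=
        hytop.const_mul_atTop ha0
      exact hnum.div_atTop hden
    have hterm2 : Tendsto (fun τ : ℝ => Real.log (L (1/τ^2)) / (a * y τ))
        (𝓝[>] (0:ℝ)) (𝓝 0) := by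
      have := hρ.div_const a
      rw [zero_div] at this
      apply this.congr
      intro τ
      rw [div_div, mul_comm (y τ) a]
    have := hterm1.add hterm2
    rw [add_zero] at this
    apply this.congr
    intro τ
    simp only [hwdef]
    rw [add_div]
  -- eventually log B τ < -(a * y τ)/2
  have hev4 : ∀ᶠ τ : ℝ in 𝓝[>] (0:ℝ), Real.log (B τ) < -(a * y τ)/2 := by
    have hρ' : ∀ᶠ τ : ℝ in 𝓝[>] (0:ℝ), |Real.log (L (1/τ^2)) / y τ| < a/4 := by
      have := (Metric.tendsto_nhds.mp hρ) (a/4) (by positivity)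
      simpa [Real.dist_eq, abs_div] using this
    have hc0 : ∀ᶠ τ : ℝ in 𝓝[>] (0:ℝ), Real.log (3*C) < (a/4) * y τ :=
      (hytop.const_mul_atTop (show (0:ℝ) < a/4 by positivity)).eventually_gt_atTop _
    filter_upwards [hev1, hev2, hev3, hρ', hc0] with τ hτ hgτ hyτ hρτ hcτ
    have hgb := abs_lt.mp hgτ
    have hgp : 0 < 1 + g τ := by linarith [hgb.1]
    rw [hlogB τ hτ hgp]
    have h1 : Real.log (2*C*(1 + g τ)) ≤ Real.log (3*C) := by
      apply Real.log_le_log (by positivity)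
      nlinarith [hgb.2]
    have h2 : Real.log (L (1/τ^2)) < (a/4) * y τ := by
      have hx := (le_abs_self (Real.log (L (1/τ^2)) / y τ)).trans_lt hρτ
      have := (div_lt_iff₀ hyτ).mp hx
      linarith [mul_comm (a/4) (y τ)]
    linarith
  refine ⟨fun τ => (1 + g τ) * Real.sqrt (2 * a * y τ) / Z τ - 1, ?_, ?_⟩
  · -- h tends to 0
    have hlim : Tendsto (fun τ : ℝ => (1 + g τ) * (Real.sqrt (1 - w τ))⁻¹ - 1)
        (𝓝[>] (0:ℝ)) (𝓝 0) := by
      have h1 : Tendsto (fun τ : ℝ => 1 + g τ) (𝓝[>] (0:ℝ)) (𝓝 1) := by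
        have := (tendsto_const_nhds (x := (1:ℝ)) (f := 𝓝[>] (0:ℝ))).add hg
        simpa using this
      have h2 : Tendsto (fun τ : ℝ => (Real.sqrt (1 - w τ))⁻¹) (𝓝[>] (0:ℝ)) (𝓝 1) := by
        have h3 : Tendsto (fun τ : ℝ => 1 - w τ) (𝓝[>] (0:ℝ)) (𝓝 1) := by
          have := (tendsto_const_nhds (x := (1:ℝ)) (f := 𝓝[>] (0:ℝ))).sub hwtend
          simpa using this
        have h4 : Tendsto (fun τ : ℝ => Real.sqrt (1 - w τ)) (𝓝[>] (0:ℝ)) (𝓝 1) := by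
          have := (Real.continuous_sqrt.tendsto 1).comp h3
          simpa [Function.comp_def] using this
        have := h4.inv₀ (by norm_num)
        simpa using this
      have := (h1.mul h2).sub (tendsto_const_nhds (x := (1:ℝ)))
      simpa using this
    apply hlim.congr'
    filter_upwards [hev1, hev2, hev3, hev4] with τ hτ hgτ hyτ hBτ
    have hgb := abs_lt.mp hgτ
    have hgp : 0 < 1 + g τ := by linarith [hgb.1]
    have hay : 0 < a * y τ := by positivity
    have hwid : -2 * Real.log (B τ) = 2 * a * y τ * (1 - w τ) := by
      rw [hlogB τ hτ hgp]
      simp only [hwdef]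
      field_simp
      ring
    have hζeq : Z τ = Real.sqrt (2 * a * y τ) * Real.sqrt (1 - w τ) := by
      simp only [hZdef]
      rw [hwid, Real.sqrt_mul (by positivity)]
    have hsqpos : 0 < Real.sqrt (2 * a * y τ) := Real.sqrt_pos.mpr (by positivity)
    rw [hζeq]
    rcases eq_or_ne (Real.sqrt (1 - w τ)) 0 with hz | hz
    · rw [hz]; simp
    · field_simp
  · -- final inequality
    filter_upwards [hev1, hev2, hev3, hev4] with τ hτ hgτ hyτ hBτ
    have hτ0 : 0 < τ := hτ.1
    have hgb := abs_lt.mp hgτ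
    have hgp : 0 < 1 + g τ := by linarith [hgb.1]
    have hLp : 0 < L (1/τ^2) := hLpos _ (by positivity)
    have hrp : (0:ℝ) < τ ^ (2*a) := Real.rpow_pos_of_pos hτ0 _
    have hshp : 0 < sh τ := by simp only [hshdef]; positivity
    have hBp : 0 < B τ := by simp only [hBdef]; positivity
    have hlogneg : 0 < -2 * Real.log (B τ) := by nlinarith [hyτ, ha0]
    have hZpos : 0 < Z τ := by simp only [hZdef]; exact Real.sqrt_pos.mpr hlogneg
    have hZsq : Z τ ^ 2 = -2 * Real.log (B τ) := by
      simp only [hZdef]; exact Real.sq_sqrt hlogneg.le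
    -- event inclusion
    have hsubset : {x : ℝ | 1/2 < postShrinkWeight a L τ x} ⊆ Iic (-(Z τ)) ∪ Ioi (Z τ) := by
      intro x hx
      have hx' : (1:ℝ)/2 < postShrinkWeight a L τ x := hx
      have hb := hbound τ hτ x
      set Q : ℝ := C * (τ ^ (2*a)) * L (1/τ^2) * (1 + g τ) with hQdef
      have hQpos : 0 < Q := by positivity
      have hbQ : C * Real.exp (x ^ 2 / 2) * τ ^ (2 * a) * L (1 / τ ^ 2) * (1 + g τ)
          = Real.exp (x^2/2) * Q := by rw [hQdef]; ring
      have h1 : 1/2 < Real.exp (x^2/2) * Q := by rw [← hbQ]; linarith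
      have hBQ : B τ = 2 * Q := by simp only [hBdef, hshdef, hQdef]; ring
      have h2 : 1 / B τ < Real.exp (x^2/2) := by
        rw [hBQ, div_lt_iff₀ (by positivity)]
        have he : Real.exp (x^2/2) * (2*Q) = 2 * (Real.exp (x^2/2) * Q) := by ring
        rw [he]
        linarith
      have h3 : Real.log (1 / B τ) < x^2/2 := (Real.log_lt_iff_lt_exp (by positivity)).mpr h2
      rw [one_div, Real.log_inv] at h3
      have h4 : Z τ ^ 2 < x ^ 2 := by rw [hZsq]; linarith
      have h5 : Z τ < |x| := by
        have := Real.sqrt_lt_sqrt (sq_nonneg (Z τ)) h4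
        rwa [Real.sqrt_sq hZpos.le, Real.sqrt_sq_eq_abs] at this
      rcases lt_abs.mp h5 with h6 | h6
      · exact Or.inr h6
      · exact Or.inl (by simp only [mem_Iic]; linarith)
    have hmono : ((gaussianReal 0 1) {x : ℝ | 1/2 < postShrinkWeight a L τ x}).toReal ≤
        ((gaussianReal 0 1) (Iic (-(Z τ)) ∪ Ioi (Z τ))).toReal :=
      ENNReal.toReal_mono (measure_ne_top _ _) (measure_mono hsubset)
    have htail := gaussian_tail hZpos
    have hexp : Real.exp (-(Z τ)^2/2) = B τ := by
      rw [hZsq, show -(-2 * Real.log (B τ))/2 = Real.log (B τ) by ring, Real.exp_log hBp]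
    -- the algebraic identity
    have halg : (1 / Real.sqrt (Real.pi * a)) * (2 * A₀ * K / (a * (1 - a))) *
          (τ ^ (2 * a) * L (1 / τ ^ 2) / Real.sqrt (Real.log (1 / τ ^ 2))) *
          (1 + ((1 + g τ) * Real.sqrt (2 * a * y τ) / Z τ - 1))
        = 2 / (Real.sqrt (2*Real.pi) * Z τ) * B τ := by
      have e1 : Real.sqrt (Real.pi * a) = Real.sqrt Real.pi * Real.sqrt a :=
        Real.sqrt_mul Real.pi_pos.le _
      have e2 : Real.sqrt (2*Real.pi) = Real.sqrt 2 * Real.sqrt Real.pi :=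
        Real.sqrt_mul (by norm_num) _
      have e3 : Real.sqrt (2 * a * y τ) = Real.sqrt 2 * Real.sqrt a * Real.sqrt (y τ) := by
        rw [show 2 * a * y τ = 2 * (a * y τ) by ring, Real.sqrt_mul (by norm_num),
          Real.sqrt_mul ha0.le]
        ring
      have hsp : 0 < Real.sqrt Real.pi := Real.sqrt_pos.mpr Real.pi_pos
      have hsa : 0 < Real.sqrt a := Real.sqrt_pos.mpr ha0
      have hsy : 0 < Real.sqrt (y τ) := Real.sqrt_pos.mpr hyτ
      have hs2 : 0 < Real.sqrt 2 := Real.sqrt_pos.mpr (by norm_num)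
      have h22 : Real.sqrt 2 * Real.sqrt 2 = 2 := Real.mul_self_sqrt (by norm_num)
      have hyy : Real.log (1 / τ ^ 2) = y τ := by simp only [hydef]
      have hCC : 2 * A₀ * K / (a * (1 - a)) = 2 * C := by rw [hCdef]; ring
      have hBval : B τ = 2 * C * (τ ^ (2*a) * L (1/τ^2)) * (1 + g τ) := by
        simp only [hBdef, hshdef]
      rw [hyy, hCC, e1, e2, e3, hBval]
      exact alg_id hsp.ne' hsa.ne' hsy.ne' hZpos.ne' h22
    calc ((gaussianReal 0 1) {x : ℝ | 1/2 < postShrinkWeight a L τ x}).toReal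
        ≤ 2 / (Real.sqrt (2*Real.pi) * Z τ) * Real.exp (-(Z τ)^2/2) := hmono.trans htail
      _ = 2 / (Real.sqrt (2*Real.pi) * Z τ) * B τ := by rw [hexp]
      _ = _ := halg.symm
end

section
/- Let X₁,...,X_m be i.i.d. with marginal distribution (1-p)N(0,1) + pN(0,1+ψ²), where p ∝ m^{-ε} for some ε ∈ (0,1) and log(ψ² (1-p)²/p²)/ψ² → C ∈ (0,∞) as m → ∞, with ψ² → ∞. Then for fixed c₁ ≥ 2, α_m := P(|X₁| > √(c₁ log m)) satisfies α_m = 2βp(1+o(1)) as m → ∞, where β = 1 - Φ(√(c₁C/(2ε))) ∈ (0, 1/2). -/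
open MeasureTheory ProbabilityTheory Filter Set Topology Real

/-- The standard normal CDF. -/
noncomputable def stdNormCDF (t : ℝ) : ℝ :=
  ((gaussianReal 0 1) (Iic t)).toReal

/-- The marginal probability `α_m = P(|X₁| > √(c₁ log m))` under the two-groups
model `X ~ (1-p)N(0,1) + pN(0,1+ψ²)`. -/
noncomputable def tailProb (p ψsq : ℕ → ℝ) (c₁ : ℝ) (m : ℕ) : ℝ :=
  (1 - p m) *
      ((gaussianReal 0 1) {x : ℝ | Real.sqrt (c₁ * Real.log m) < |x|}).toReal +
    p m *
      ((gaussianReal 0 (1 + ψsq m).toNNReal)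
        {x : ℝ | Real.sqrt (c₁ * Real.log m) < |x|}).toReal

lemma gauss_singleton (t : ℝ) : gaussianReal 0 1 {t} = 0 :=
  gaussianReal_absolutelyContinuous 0 one_ne_zero (volume_singleton)

lemma gauss_neg_map : (gaussianReal 0 1).map (fun x : ℝ => (-1) * x) = gaussianReal 0 1 := by
  rw [show (fun x : ℝ => (-1) * x) = ((-1 : ℝ) * ·) from rfl, gaussianReal_map_const_mul]
  congr 1
  · ring
  · ext
    norm_num

lemma gauss_Ioi (t : ℝ) : ((gaussianReal 0 1) (Ioi t)).toReal = stdNormCDF (-t) := by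
  unfold stdNormCDF
  have h1 : gaussianReal 0 1 (Iic (-t)) = gaussianReal 0 1 (Ici t) := by
    conv_lhs => rw [← gauss_neg_map]
    rw [Measure.map_apply (by fun_prop) measurableSet_Iic]
    congr 1
    ext x
    simp [neg_le]
  have h2 : gaussianReal 0 1 (Ici t) = gaussianReal 0 1 (Ioi t) := by
    rw [← Ioi_union_left]
    refine le_antisymm ?_ (measure_mono subset_union_left)
    calc gaussianReal 0 1 (Ioi t ∪ {t}) ≤ gaussianReal 0 1 (Ioi t) + gaussianReal 0 1 {t} :=
          measure_union_le _ _
      _ = gaussianReal 0 1 (Ioi t) := by rw [gauss_singleton, add_zero]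
  rw [h1, h2]

lemma stdNormCDF_compl (t : ℝ) : stdNormCDF (-t) = 1 - stdNormCDF t := by
  have h := measure_add_measure_compl (μ := gaussianReal 0 1) (s := Iic t) measurableSet_Iic
  rw [compl_Iic] at h
  have h1 : gaussianReal 0 1 (Iic t) ≠ ⊤ := measure_ne_top _ _
  have h2 : gaussianReal 0 1 (Ioi t) ≠ ⊤ := measure_ne_top _ _
  have := congrArg ENNReal.toReal h
  rw [ENNReal.toReal_add h1 h2] at this
  simp only [measure_univ, ENNReal.toReal_one] at this
  rw [← gauss_Ioi]
  unfold stdNormCDF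
  linarith

lemma stdNormCDF_nonneg (t : ℝ) : 0 ≤ stdNormCDF t := ENNReal.toReal_nonneg

lemma stdNormCDF_le_one (t : ℝ) : stdNormCDF t ≤ 1 := by
  unfold stdNormCDF
  rw [show (1:ℝ) = (1 : ENNReal).toReal by simp]
  exact ENNReal.toReal_mono ENNReal.one_ne_top prob_le_one

lemma gauss_set_toReal (s : Set ℝ) :
    ((gaussianReal 0 1) s).toReal = ∫ x in s, gaussianPDFReal 0 1 x := by
  rw [gaussianReal_apply_eq_integral 0 one_ne_zero s, ENNReal.toReal_ofReal]
  exact integral_nonneg (fun x => gaussianPDFReal_nonneg 0 1 x)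

lemma stdNormCDF_continuous : Continuous stdNormCDF := by
  have hint : Integrable (gaussianPDFReal 0 1) := integrable_gaussianPDFReal 0 1
  have key : ∀ t : ℝ, stdNormCDF t = stdNormCDF 0 + ∫ x in (0:ℝ)..t, gaussianPDFReal 0 1 x := by
    intro t
    unfold stdNormCDF
    rw [gauss_set_toReal, gauss_set_toReal,
      ← intervalIntegral.integral_Iic_sub_Iic hint.integrableOn hint.integrableOn]
    ring
  rw [show stdNormCDF = fun t => stdNormCDF 0 + ∫ x in (0:ℝ)..t, gaussianPDFReal 0 1 x from
    funext key]
  exact continuous_const.add (hint.continuous_primitive 0)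

/-- two-sided tail -/
lemma gauss_two_sided {t : ℝ} (ht : 0 ≤ t) :
    ((gaussianReal 0 1) {x : ℝ | t < |x|}).toReal = 2 * (1 - stdNormCDF t) := by
  have hset : {x : ℝ | t < |x|} = Iio (-t) ∪ Ioi t := by
    ext x
    simp only [mem_setOf_eq, mem_union, mem_Iio, mem_Ioi]
    rw [lt_abs]
    constructor
    · rintro (h | h)
      · right; exact h
      · left; linarith
    · rintro (h | h)
      · right; linarith
      · left; exact h
  have hdisj : Disjoint (Iio (-t)) (Ioi t) := by
    rw [Set.disjoint_left]
    intro x hx hx'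
    simp only [mem_Iio] at hx
    simp only [mem_Ioi] at hx'
    linarith
  rw [hset]
  have hu := measure_union (μ := gaussianReal 0 1) hdisj measurableSet_Ioi
  rw [hu]
  rw [ENNReal.toReal_add (measure_ne_top (gaussianReal 0 1) _) (measure_ne_top (gaussianReal 0 1) _)]
  have hIio : ((gaussianReal 0 1) (Iio (-t))).toReal = stdNormCDF (-t) := by
    unfold stdNormCDF
    congr 1
    rw [← Iio_union_right]
    refine le_antisymm (measure_mono subset_union_left) ?_
    calc gaussianReal 0 1 (Iio (-t) ∪ {-t}) ≤ gaussianReal 0 1 (Iio (-t)) + gaussianReal 0 1 {-t} :=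
          measure_union_le _ _
      _ = gaussianReal 0 1 (Iio (-t)) := by rw [gauss_singleton, add_zero]
  rw [hIio, gauss_Ioi, stdNormCDF_compl]
  ring

lemma gauss_tail_bound {t : ℝ} (ht : 1 ≤ t) :
    1 - stdNormCDF t ≤ Real.exp (-(t^2) / 2) / 2 := by
  have ht0 : 0 < t := by linarith
  have h1 : 1 - stdNormCDF t = ((gaussianReal 0 1) (Ioi t)).toReal := by
    rw [gauss_Ioi, stdNormCDF_compl]
  rw [h1, gauss_set_toReal]
  have hbound : ∀ x ∈ Ioi t, gaussianPDFReal 0 1 x ≤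
      (Real.sqrt (2 * π))⁻¹ * (Real.exp (t^2/2) * Real.exp (-t * x)) := by
    intro x _
    unfold gaussianPDFReal
    rw [← Real.exp_add]
    push_cast
    rw [mul_one]
    gcongr
    nlinarith [sq_nonneg (x - t)]
  have hint : IntegrableOn (fun x => (Real.sqrt (2 * π))⁻¹ *
      (Real.exp (t^2/2) * Real.exp (-t * x))) (Ioi t) := by
    apply Integrable.const_mul
    apply Integrable.const_mul
    exact exp_neg_integrableOn_Ioi t ht0
  have hmono := setIntegral_mono_on ((integrable_gaussianPDFReal 0 1).integrableOn) hint
    measurableSet_Ioi hbound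
  refine hmono.trans ?_
  rw [integral_const_mul, integral_const_mul]
  have hexp : ∫ x in Ioi t, Real.exp (-t * x) = t⁻¹ * Real.exp (-(t*t)) := by
    have := integral_comp_mul_left_Ioi (fun x => Real.exp (-x)) t ht0
    simp only [smul_eq_mul] at this
    calc ∫ x in Ioi t, Real.exp (-t * x) = ∫ x in Ioi t, Real.exp (-(t * x)) := by
          congr 1 with x; ring_nf
      _ = t⁻¹ * ∫ x in Ioi (t*t), Real.exp (-x) := this
      _ = t⁻¹ * Real.exp (-(t*t)) := by rw [integral_exp_neg_Ioi]
  rw [hexp]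
  have hsqrt : 2 ≤ Real.sqrt (2 * π) := by
    nlinarith [Real.sq_sqrt (show (0:ℝ) ≤ 2*π by positivity), Real.sqrt_nonneg (2*π),
      Real.pi_gt_three]
  have key : Real.exp (t ^ 2 / 2) * (t⁻¹ * Real.exp (-(t * t))) = Real.exp (-(t^2)/2) * t⁻¹ := by
    rw [show Real.exp (t^2/2) * (t⁻¹ * Real.exp (-(t*t)))
        = Real.exp (t^2/2) * Real.exp (-(t*t)) * t⁻¹ by ring, ← Real.exp_add]
    congr 2
    ring
  rw [key]
  rw [div_eq_mul_inv (Real.exp _) 2]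
  have h2 : (Real.sqrt (2 * π))⁻¹ ≤ 2⁻¹ := by
    apply inv_anti₀ (by norm_num) hsqrt
  have h3 : t⁻¹ ≤ 1 := by
    rw [inv_le_one_iff₀]; right; exact ht
  calc (Real.sqrt (2*π))⁻¹ * (Real.exp (-(t^2)/2) * t⁻¹)
      ≤ 2⁻¹ * (Real.exp (-(t^2)/2) * 1) := by
        have he : 0 ≤ Real.exp (-(t^2)/2) := (Real.exp_pos _).le
        have ht' : 0 ≤ t⁻¹ := by positivity
        exact mul_le_mul h2 (mul_le_mul_of_nonneg_left h3 he) (mul_nonneg he ht') (by norm_num)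
    _ = Real.exp (-(t^2)/2) * 2⁻¹ := by ring

lemma gauss_scaling {V t : ℝ} (hV : 0 < V) :
    ((gaussianReal 0 V.toNNReal) {x : ℝ | t < |x|}).toReal
      = ((gaussianReal 0 1) {x : ℝ | t / Real.sqrt V < |x|}).toReal := by
  have hσ : 0 < Real.sqrt V := Real.sqrt_pos.mpr hV
  have hmap : (gaussianReal 0 1).map ((Real.sqrt V) * ·) = gaussianReal 0 V.toNNReal := by
    rw [gaussianReal_map_const_mul]
    congr 1
    · ring
    · ext
      simp [Real.sq_sqrt hV.le, hV.le]
  have hs : MeasurableSet {x : ℝ | t < |x|} := by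
    have : {x : ℝ | t < |x|} = abs ⁻¹' Ioi t := rfl
    rw [this]
    exact (measurable_abs) measurableSet_Ioi
  rw [← hmap, Measure.map_apply (by fun_prop) hs]
  congr 2
  ext x
  simp only [mem_preimage, mem_setOf_eq]
  rw [abs_mul, abs_of_pos hσ, div_lt_iff₀ hσ, mul_comm]

lemma gauss_pos_of_volume_pos {s : Set ℝ} (h : volume s ≠ 0) : gaussianReal 0 1 s ≠ 0 := by
  intro h0
  exact h (gaussianReal_absolutelyContinuous' 0 one_ne_zero h0)

lemma stdNormCDF_pos (t : ℝ) : 0 < stdNormCDF t := by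
  apply ENNReal.toReal_pos _ (measure_ne_top _ _)
  apply gauss_pos_of_volume_pos
  simp [Real.volume_Iic]

lemma stdNormCDF_zero : stdNormCDF 0 = 1/2 := by
  have := stdNormCDF_compl 0
  rw [neg_zero] at this
  linarith

lemma half_lt_stdNormCDF {L : ℝ} (hL : 0 < L) : 1/2 < stdNormCDF L := by
  have hsplit : Iic (0:ℝ) ∪ Ioc 0 L = Iic L := Iic_union_Ioc_eq_Iic hL.le
  have hdisj : Disjoint (Iic (0:ℝ)) (Ioc 0 L) := by
    rw [Set.disjoint_left]
    intro x hx hx'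
    exact absurd hx' (by simp only [mem_Iic] at hx; simp [mem_Ioc]; intro h; linarith)
  have hu := measure_union (μ := gaussianReal 0 1) hdisj measurableSet_Ioc
  rw [hsplit] at hu
  have h2 : 0 < ((gaussianReal 0 1) (Ioc 0 L)).toReal := by
    apply ENNReal.toReal_pos _ (measure_ne_top _ _)
    apply gauss_pos_of_volume_pos
    rw [Real.volume_Ioc]
    simp only [ne_eq, ENNReal.ofReal_eq_zero, not_le, sub_zero]
    exact hL
  have : stdNormCDF L = stdNormCDF 0 + ((gaussianReal 0 1) (Ioc 0 L)).toReal := by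
    unfold stdNormCDF
    rw [hu, ENNReal.toReal_add (measure_ne_top (gaussianReal 0 1) _)
      (measure_ne_top (gaussianReal 0 1) _)]
  rw [this, stdNormCDF_zero]
  linarith

/-- Under the two-groups model with `p ∝ m^{-ε}`, `ψ² → ∞` and
`log(ψ²((1-p)/p)²)/ψ² → C ∈ (0,∞)`, for fixed `c₁ ≥ 2` one has
`α_m = P(|X₁| > √(c₁ log m)) = 2βp(1+o(1))` where
`β = 1 - Φ(√(c₁C/(2ε))) ∈ (0,1/2)`. -/
theorem tail_prob_asymptotics (p ψsq : ℕ → ℝ) (C ε c₁ c : ℝ)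
    (hε : ε ∈ Ioo (0:ℝ) 1) (hc₁ : 2 ≤ c₁) (hc : 0 < c)
    (hp : ∀ m ≥ 1, p m = c * (m : ℝ) ^ (-ε))
    (hp01 : ∀ m ≥ 1, p m ∈ Ioo (0:ℝ) 1)
    (hψpos : ∀ m, 0 < ψsq m)
    (hψ : Tendsto ψsq atTop atTop)
    (hC : 0 < C)
    (hv : Tendsto
      (fun m : ℕ => Real.log (ψsq m * ((1 - p m) / p m) ^ 2) / ψsq m)
      atTop (𝓝 C)) :
    0 < 1 - stdNormCDF (Real.sqrt (c₁ * C / (2 * ε))) ∧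
      1 - stdNormCDF (Real.sqrt (c₁ * C / (2 * ε))) < 1/2 ∧
      Tendsto
        (fun m : ℕ =>
          tailProb p ψsq c₁ m /
            (2 * (1 - stdNormCDF (Real.sqrt (c₁ * C / (2 * ε)))) * p m))
        atTop (𝓝 1) := by
  obtain ⟨hε0, hε1⟩ := hε
  have hc₁0 : (0:ℝ) < c₁ := by linarith
  have hKpos : 0 < c₁ * C / (2 * ε) := by positivity
  set L := Real.sqrt (c₁ * C / (2 * ε)) with hLdef
  have hL : 0 < L := Real.sqrt_pos.mpr hKpos
  set β := 1 - stdNormCDF L with hβdef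
  have hβpos : 0 < β := by
    have h := stdNormCDF_pos (-L)
    rw [stdNormCDF_compl] at h
    exact h
  have hβlt : β < 1/2 := by
    have := half_lt_stdNormCDF hL
    rw [hβdef]; linarith
  refine ⟨hβpos, hβlt, ?_⟩
  set t : ℕ → ℝ := fun m => Real.sqrt (c₁ * Real.log m) with htdef
  set u : ℕ → ℝ := fun m => t m / Real.sqrt (1 + ψsq m) with hudef
  -- basic limits
  have hcast : Tendsto (fun m : ℕ => (m:ℝ)) atTop atTop := tendsto_natCast_atTop_atTop
  have hlogm : Tendsto (fun m : ℕ => Real.log m) atTop atTop :=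
    Real.tendsto_log_atTop.comp hcast
  have hp0 : Tendsto p atTop (𝓝 0) := by
    have h1 : Tendsto (fun m : ℕ => c * (m:ℝ) ^ (-ε)) atTop (𝓝 (c * 0)) :=
      tendsto_const_nhds.mul ((tendsto_rpow_neg_atTop hε0).comp hcast)
    rw [mul_zero] at h1
    apply h1.congr'
    filter_upwards [eventually_ge_atTop 1] with m hm
    exact (hp m hm).symm
  have hA : Tendsto (fun m : ℕ => Real.log (ψsq m) / ψsq m) atTop (𝓝 0) :=
    (Real.isLittleO_log_id_atTop.tendsto_div_nhds_zero).comp hψ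
  have hinvψ : Tendsto (fun m : ℕ => (ψsq m)⁻¹) atTop (𝓝 0) := tendsto_inv_atTop_zero.comp hψ
  have hlog1p : Tendsto (fun m : ℕ => Real.log (1 - p m)) atTop (𝓝 0) := by
    have h1 : Tendsto (fun m : ℕ => 1 - p m) atTop (𝓝 1) := by
      have := tendsto_const_nhds (x := (1:ℝ)) (f := atTop (α := ℕ)) |>.sub hp0
      simpa using this
    have h2 := (Real.continuousAt_log one_ne_zero).tendsto.comp h1
    rw [Real.log_one] at h2
    exact h2
  have hB : Tendsto (fun m : ℕ => (2 * Real.log (1 - p m) - 2 * Real.log c) * (ψsq m)⁻¹)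
      atTop (𝓝 0) := by
    have h1 : Tendsto (fun m : ℕ => 2 * Real.log (1 - p m) - 2 * Real.log c) atTop
        (𝓝 (2 * 0 - 2 * Real.log c)) :=
      (tendsto_const_nhds.mul hlog1p).sub tendsto_const_nhds
    have := h1.mul hinvψ
    simpa using this
  have hD : Tendsto (fun m : ℕ => 2 * ε * Real.log m / ψsq m) atTop (𝓝 C) := by
    have h1 := (hv.sub hA).sub hB
    rw [show C - 0 - 0 = C by ring] at h1
    apply h1.congr'
    filter_upwards [eventually_ge_atTop 1] with m hm
    obtain ⟨hpm0, hpm1⟩ := hp01 m hm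
    have hψm := hψpos m
    have hm0 : (0:ℝ) < m := by exact_mod_cast hm
    have e1 : Real.log (ψsq m * ((1 - p m) / p m) ^ 2)
        = Real.log (ψsq m) + 2 * Real.log ((1 - p m) / p m) := by
      rw [Real.log_mul hψm.ne'
        (pow_ne_zero 2 (div_pos (by linarith) hpm0).ne'), Real.log_pow]
      push_cast; ring
    have e2 : Real.log ((1 - p m) / p m) = Real.log (1 - p m) - Real.log (p m) :=
      Real.log_div (by linarith) hpm0.ne'
    have e3 : Real.log (p m) = Real.log c - ε * Real.log m := by
      rw [hp m hm, Real.log_mul hc.ne' (by positivity), Real.log_rpow hm0]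
      ring
    rw [e1, e2, e3]
    field_simp
    ring
  have h1ψ : Tendsto (fun m => 1 + ψsq m) atTop atTop :=
    tendsto_atTop_add_const_left _ 1 hψ
  have hinv1ψ : Tendsto (fun m : ℕ => (1 + ψsq m)⁻¹) atTop (𝓝 0) :=
    tendsto_inv_atTop_zero.comp h1ψ
  have hW : Tendsto (fun m : ℕ => ψsq m / (1 + ψsq m)) atTop (𝓝 1) := by
    have h1 := tendsto_const_nhds (x := (1:ℝ)) (f := atTop (α := ℕ)) |>.sub hinv1ψ
    rw [sub_zero] at h1
    apply h1.congr
    intro m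
    have h2 : (1:ℝ) + ψsq m ≠ 0 := by have := hψpos m; positivity
    field_simp
    ring
  have hE : Tendsto (fun m : ℕ => c₁ * Real.log m / (1 + ψsq m)) atTop (𝓝 (c₁ * C / (2 * ε))) := by
    have h1 : Tendsto (fun m : ℕ => (c₁ / (2 * ε)) * (2 * ε * Real.log m / ψsq m *
        (ψsq m / (1 + ψsq m)))) atTop (𝓝 ((c₁ / (2 * ε)) * (C * 1))) :=
      tendsto_const_nhds.mul (hD.mul hW)
    rw [show (c₁ / (2 * ε)) * (C * 1) = c₁ * C / (2 * ε) by ring] at h1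
    apply h1.congr
    intro m
    have h2 : (1:ℝ) + ψsq m ≠ 0 := by have := hψpos m; positivity
    have h3 : ψsq m ≠ 0 := (hψpos m).ne'
    field_simp
  have hu : Tendsto u atTop (𝓝 L) := by
    have h1 := (Real.continuous_sqrt.tendsto (c₁ * C / (2 * ε))).comp hE
    apply h1.congr'
    filter_upwards [eventually_ge_atTop 1] with m hm
    have hm1 : (1:ℝ) ≤ m := by exact_mod_cast hm
    have hlognn : 0 ≤ Real.log m := Real.log_nonneg hm1
    have hnum : 0 ≤ c₁ * Real.log m := by positivity
    simp only [Function.comp_apply, hudef, htdef]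
    rw [Real.sqrt_div hnum]
  have hΦu : Tendsto (fun m : ℕ => stdNormCDF (u m)) atTop (𝓝 (stdNormCDF L)) :=
    (stdNormCDF_continuous.tendsto L).comp hu
  have hf2 : Tendsto (fun m : ℕ => (1 - stdNormCDF (u m)) / β) atTop (𝓝 1) := by
    have h1 := (tendsto_const_nhds (x := (1:ℝ)) (f := atTop (α := ℕ)) |>.sub hΦu).div_const β
    rw [show (1 - stdNormCDF L) / β = 1 by rw [← hβdef]; exact div_self hβpos.ne'] at h1
    exact h1
  -- the first term tends to 0
  set G : ℝ → ℝ := fun s => ((gaussianReal 0 1) {x : ℝ | s < |x|}).toReal with hGdef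
  set f1 : ℕ → ℝ := fun m => (1 - p m) * G (t m) / (2 * β * p m) with hf1def
  have ht1 : ∀ᶠ m : ℕ in atTop, 1 ≤ c₁ * Real.log m :=
    (hlogm.const_mul_atTop hc₁0).eventually_ge_atTop 1
  have hub : Tendsto (fun m : ℕ => (1 / (2 * β * c)) * (m:ℝ) ^ (ε - c₁/2)) atTop (𝓝 0) := by
    have h1 : Tendsto (fun m : ℕ => (m:ℝ) ^ (-(c₁/2 - ε))) atTop (𝓝 0) :=
      (tendsto_rpow_neg_atTop (by linarith)).comp hcast
    have h2 := tendsto_const_nhds (x := 1 / (2 * β * c)) (f := atTop (α := ℕ)) |>.mul h1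
    rw [mul_zero] at h2
    apply h2.congr
    intro m
    norm_num
  have hf1 : Tendsto f1 atTop (𝓝 0) := by
    apply tendsto_of_tendsto_of_tendsto_of_le_of_le' tendsto_const_nhds hub
    · filter_upwards [eventually_ge_atTop 1] with m hm
      obtain ⟨hpm0, hpm1⟩ := hp01 m hm
      have hG0 : 0 ≤ G (t m) := ENNReal.toReal_nonneg
      apply div_nonneg (mul_nonneg (by linarith) hG0)
      positivity
    · filter_upwards [eventually_ge_atTop 1, ht1] with m hm hmt
      obtain ⟨hpm0, hpm1⟩ := hp01 m hm
      have hm0 : (0:ℝ) < m := by exact_mod_cast hm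
      have hlognn : 0 ≤ c₁ * Real.log m := by linarith
      have htm1 : 1 ≤ t m := by
        rw [htdef, show (1:ℝ) = Real.sqrt 1 from (Real.sqrt_one).symm]
        exact Real.sqrt_le_sqrt hmt
      have htm0 : 0 ≤ t m := by linarith
      have hGle : G (t m) ≤ Real.exp (-(c₁ * Real.log m) / 2) := by
        rw [hGdef]
        have h2 := gauss_two_sided htm0
        have h3 := gauss_tail_bound htm1
        have h4 : t m ^ 2 = c₁ * Real.log m := Real.sq_sqrt hlognn
        rw [← h4]
        calc ((gaussianReal 0 1) {x : ℝ | t m < |x|}).toReal = 2 * (1 - stdNormCDF (t m)) := h2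
          _ ≤ 2 * (Real.exp (-(t m ^ 2) / 2) / 2) := by linarith
          _ = Real.exp (-(t m ^ 2) / 2) := by ring
      have hexp_rpow : Real.exp (-(c₁ * Real.log m) / 2) = (m:ℝ) ^ (-(c₁/2)) := by
        rw [Real.rpow_def_of_pos hm0]
        congr 1
        ring
      have hG0 : 0 ≤ G (t m) := ENNReal.toReal_nonneg
      calc f1 m ≤ Real.exp (-(c₁ * Real.log m) / 2) / (2 * β * p m) := by
            show (1 - p m) * G (t m) / (2 * β * p m) ≤ _
            have hden : 0 < 2 * β * p m := by positivity
            rw [div_le_div_iff_of_pos_right hden]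
            exact le_trans (mul_le_of_le_one_left hG0 (by linarith)) hGle
        _ = (1 / (2 * β * c)) * (m:ℝ) ^ (ε - c₁/2) := by
            rw [hexp_rpow, hp m hm]
            rw [show ε - c₁/2 = -(c₁/2) - (-ε) by ring, Real.rpow_sub hm0]
            have hne : (m:ℝ) ^ (-ε) ≠ 0 := (Real.rpow_pos_of_pos hm0 _).ne'
            field_simp
  -- put things together
  have hsum : Tendsto (fun m : ℕ => f1 m + (1 - stdNormCDF (u m)) / β) atTop (𝓝 1) := by
    have := hf1.add hf2
    simpa using this
  apply hsum.congr'
  filter_upwards [eventually_ge_atTop 1] with m hm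
  obtain ⟨hpm0, hpm1⟩ := hp01 m hm
  have hVpos : (0:ℝ) < 1 + ψsq m := by have := hψpos m; linarith
  have hu0 : 0 ≤ u m := div_nonneg (Real.sqrt_nonneg _) (Real.sqrt_nonneg _)
  have hscale := gauss_scaling (t := t m) hVpos
  have hts : ((gaussianReal 0 (1 + ψsq m).toNNReal) {x : ℝ | t m < |x|}).toReal
      = 2 * (1 - stdNormCDF (u m)) := by
    rw [hscale, ← gauss_two_sided hu0]
  rw [hf1def]
  unfold tailProb
  rw [show Real.sqrt (c₁ * Real.log m) = t m from rfl, hts]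
  rw [hGdef]
  field_simp
end
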